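/- arXiv:1504.05718 — 2 statements merged into one kernel-verified Lean document; each statement's English description precedes it below -/
import Mathlib

section
/- For every n ≥ 1, the Salajan discriminator D_S(n) is not divisible by 3. -/
/-- The Salajan sequence: `u j = (3^j - 5*(-1)^j)/4`. -/
def salajanU (j : ℕ) : ℤ := ((3 : ℤ) ^ j - 5 * (-1) ^ j) / 4

/-- The Salajan discriminator. -/
noncomputable def salajanD (n : ℕ) : ℕ :=
  sInf {m : ℕ | 0 < m ∧ ∀ i j : ℕ, 1 ≤ i → i < j → j ≤ n →
    ¬ (salajanU i ≡ salajanU j [ZMOD (m : ℤ)])}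


lemma four_dvd_num (j : ℕ) : (4:ℤ) ∣ 3 ^ j - 5 * (-1) ^ j := by
  induction j with
  | zero => norm_num
  | succ j ih =>
    have h : (3:ℤ) ^ (j+1) - 5 * (-1) ^ (j+1) = 3 * (3 ^ j - 5 * (-1) ^ j) + 4 * (5 * (-1) ^ j) := by
      ring
    rw [h]
    exact dvd_add (Dvd.dvd.mul_left ih 3) (Dvd.intro _ rfl)

lemma four_mul_salajanU (j : ℕ) : 4 * salajanU j = 3 ^ j - 5 * (-1) ^ j :=
  Int.mul_ediv_cancel' (four_dvd_num j)

lemma sq_helper (x : ℕ) (hx : 1 ≤ x) : (x - 1) * (x + 1) + 1 = x * x := by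
  obtain ⟨y, rfl⟩ : ∃ y, x = y + 1 := ⟨x - 1, by omega⟩
  simp
  ring

-- easy direction of LTE
lemma easy_lte : ∀ j : ℕ, 1 ≤ j → (2:ℕ) ^ (j+2) ∣ 3 ^ (2 ^ j) - 1 := by
  intro j hj
  induction j with
  | zero => omega
  | succ j ih =>
    rcases Nat.eq_or_lt_of_le hj with h1 | h2
    · simp [← h1]
    · have hj1 : 1 ≤ j := by omega
      have ihh := ih hj1
      have hx1 : 1 ≤ (3:ℕ) ^ (2 ^ j) := Nat.one_le_pow _ _ (by norm_num)
      have hodd : (3:ℕ) ^ (2 ^ j) % 2 = 1 := by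
        exact Nat.odd_iff.mp (Odd.pow ⟨1, by norm_num⟩)
      have hfac : 3 ^ (2 ^ (j+1)) - 1 = (3 ^ (2 ^ j) - 1) * (3 ^ (2 ^ j) + 1) := by
        have h1 : (3:ℕ) ^ (2 ^ (j+1)) = 3 ^ (2 ^ j) * 3 ^ (2 ^ j) := by
          rw [← pow_add]
          congr 1
          omega
        have h2 := sq_helper (3 ^ (2 ^ j)) hx1
        omega
      rw [hfac]
      have h2x : 2 ∣ 3 ^ (2 ^ j) + 1 := by omega
      calc (2:ℕ) ^ (j+1+2) = 2 ^ (j+2) * 2 := by ring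
      _ ∣ (3 ^ (2 ^ j) - 1) * (3 ^ (2 ^ j) + 1) := mul_dvd_mul ihh h2x

lemma nine_pow_mod8 (s : ℕ) : (8:ℤ) ∣ 9 ^ s - 1 := by
  have h : (9:ℤ) ^ s - 1 ^ s = 9 ^ s - 1 := by ring
  calc (8:ℤ) = 9 - 1 := by norm_num
  _ ∣ 9 ^ s - 1 ^ s := sub_dvd_pow_sub_pow 9 1 s
  _ = 9 ^ s - 1 := h

lemma hard_lte (c : ℕ) : ∀ m : ℕ, ((2:ℤ) ^ (c+3) ∣ 3 ^ (2*m) - 1) → (2:ℕ) ^ c ∣ m := by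
  induction c with
  | zero => intro m _; simp
  | succ c ih =>
    intro m hdvd
    rcases Nat.even_or_odd m with ⟨m', rfl⟩ | hm
    · -- even case
      obtain ⟨t, ht⟩ := nine_pow_mod8 m'
      have hx : (9:ℤ) ^ m' = 8 * t + 1 := by linarith
      have hfac : (3:ℤ) ^ (2*(m'+m')) - 1 = (9 ^ m' - 1) * (2 * (4*t+1)) := by
        rw [pow_mul]
        norm_num
        rw [show m' + m' = m' * 2 by ring, pow_mul, hx]
        ring
      rw [hfac] at hdvd
      have hcancel : (2:ℤ) ^ (c+3) ∣ (9 ^ m' - 1) * (4*t+1) := by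
        rcases hdvd with ⟨v, hv⟩
        refine ⟨v, ?_⟩
        have h2 : (2:ℤ) * ((9 ^ m' - 1) * (4*t+1)) = 2 * (2 ^ (c+3) * v) := by
          linear_combination hv
        exact mul_left_cancel₀ (by norm_num) h2
      have hcop : IsCoprime ((2:ℤ) ^ (c+3)) (4*t+1) := by
        apply IsCoprime.pow_left
        exact ⟨-2*t, 1, by ring⟩
      have hdd : (2:ℤ) ^ (c+3) ∣ 9 ^ m' - 1 := hcop.dvd_of_dvd_mul_right hcancel
      have hdd' : (2:ℤ) ^ (c+3) ∣ 3 ^ (2*m') - 1 := by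
        rw [pow_mul]; norm_num; exact hdd
      obtain ⟨q, hq⟩ := ih m' hdd'
      exact ⟨q, by rw [hq, pow_succ]; ring⟩
    · -- odd case: contradiction
      exfalso
      obtain ⟨s, rfl⟩ := hm
      have h81 : (16:ℤ) ∣ 81 ^ s - 1 := by
        have h : (81:ℤ) ^ s - 1 ^ s = 81 ^ s - 1 := by ring
        calc (16:ℤ) ∣ 81 - 1 := by norm_num
        _ ∣ 81 ^ s - 1 ^ s := sub_dvd_pow_sub_pow 81 1 s
        _ = 81 ^ s - 1 := h
      obtain ⟨p, hp⟩ := h81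
      have h16 : (16:ℤ) ∣ 3 ^ (2*(2*s+1)) - 1 :=
        dvd_trans (by calc (16:ℤ) = 2 ^ 4 := by norm_num
                       _ ∣ 2 ^ (c+1+3) := pow_dvd_pow 2 (by omega)) hdvd
      have hval : (3:ℤ) ^ (2*(2*s+1)) = 9 * 81 ^ s := by
        rw [show 2*(2*s+1) = 4*s+2 by ring, pow_add, pow_mul]
        norm_num
        ring
      obtain ⟨w, hw⟩ := h16
      rw [hval, show (81:ℤ) ^ s = 16*p+1 from by linarith] at hw
      omega

lemma lte_even (e k : ℕ) (hk : Even k) (h : (2:ℤ) ^ (e+2) ∣ 3 ^ k - 1) : (2:ℕ) ^ e ∣ k := by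
  obtain ⟨m, rfl⟩ := hk
  cases e with
  | zero => simp
  | succ c =>
    have h' : (2:ℤ) ^ (c+3) ∣ 3 ^ (2*m) - 1 := by
      rw [show 2*m = m + m by ring]
      exact h
    obtain ⟨q, hq⟩ := hard_lte c m h'
    exact ⟨q, by rw [hq, pow_succ]; ring⟩

lemma nine_mod8' (s : ℕ) : ∃ t : ℤ, (9:ℤ) ^ s = 8 * t + 1 := by
  have h : (9:ℤ) ^ s - 1 ^ s = 9 ^ s - 1 := by ring
  have : (8:ℤ) ∣ 9 ^ s - 1 := by
    calc (8:ℤ) = 9 - 1 := by norm_num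
    _ ∣ 9 ^ s - 1 ^ s := sub_dvd_pow_sub_pow 9 1 s
    _ = 9 ^ s - 1 := h
  obtain ⟨t, ht⟩ := this
  exact ⟨t, by linarith⟩

lemma two_pow_discr (e i j : ℕ) (hi : 1 ≤ i) (hij : i < j) (hlt : j - i < 2 ^ e) :
    ¬ ((2:ℤ) ^ e ∣ salajanU j - salajanU i) := by
  intro hdvd
  obtain ⟨k, hk, hkpos⟩ : ∃ k, j = i + k ∧ 0 < k := ⟨j - i, by omega, by omega⟩
  subst hk
  have hklt : k < 2 ^ e := by omega
  have he1 : 1 ≤ e := by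
    rcases Nat.eq_zero_or_pos e with rfl | h
    · simp at hklt; omega
    · exact h
  have h4d : (4:ℤ) * (salajanU (i+k) - salajanU i)
      = 3 ^ (i+k) - 3 ^ i - 5 * ((-1) ^ (i+k) - (-1) ^ i) := by
    rw [mul_sub, four_mul_salajanU, four_mul_salajanU]; ring
  rcases Nat.even_or_odd k with hke | hko
  · -- same parity
    have hsame : (4:ℤ) * (salajanU (i+k) - salajanU i) = 3 ^ i * (3 ^ k - 1) := by
      rw [h4d, pow_add, pow_add, hke.neg_one_pow]; ring
    have h2 : (2:ℤ) ^ (e+2) ∣ 3 ^ i * ((3:ℤ) ^ k - 1) := by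
      rw [← hsame, show (2:ℤ) ^ (e+2) = 4 * 2 ^ e from by ring]
      exact mul_dvd_mul_left 4 hdvd
    have hcop : IsCoprime ((2:ℤ) ^ (e+2)) ((3:ℤ) ^ i) := by
      apply IsCoprime.pow
      exact ⟨2, -1, by ring⟩
    have h3k : (2:ℤ) ^ (e+2) ∣ (3:ℤ) ^ k - 1 := hcop.dvd_of_dvd_mul_left h2
    have := lte_even e k hke h3k
    have := Nat.le_of_dvd hkpos this
    omega
  · -- different parity: u j - u i is odd
    have h2d : (2:ℤ) ∣ salajanU (i+k) - salajanU i :=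
      dvd_trans (dvd_pow_self 2 (by omega : e ≠ 0)) hdvd
    obtain ⟨d', hd'⟩ := h2d
    obtain ⟨v, hv⟩ := hko
    have h8d : (8:ℤ) * d' = 3 ^ (i+k) - 3 ^ i - 5 * ((-1) ^ (i+k) - (-1) ^ i) := by
      rw [← h4d, hd']; ring
    rcases Nat.even_or_odd i with ⟨s, hs⟩ | ⟨s, hs⟩
    · -- i = s+s even, i+k odd
      have h3i : (3:ℤ) ^ i = 9 ^ s := by
        rw [hs, pow_add, ← mul_pow]; norm_num
      have h3j : (3:ℤ) ^ (i+k) = 9 ^ (s+v) * 3 := by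
        rw [show i + k = 2*(s+v) + 1 by omega, pow_succ, pow_mul]; norm_num
      have hni : ((-1:ℤ)) ^ i = 1 := Even.neg_one_pow ⟨s, hs⟩
      have hnj : ((-1:ℤ)) ^ (i+k) = -1 := Odd.neg_one_pow ⟨s+v, by omega⟩
      rw [h3i, h3j, hni, hnj] at h8d
      obtain ⟨p, hp⟩ := nine_mod8' s
      obtain ⟨q, hq⟩ := nine_mod8' (s+v)
      rw [hp, hq] at h8d
      omega
    · -- i = 2s+1 odd, i+k even
      have h3i : (3:ℤ) ^ i = 9 ^ s * 3 := by
        rw [hs, pow_succ, pow_mul]; norm_num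
      have h3j : (3:ℤ) ^ (i+k) = 9 ^ (s+v+1) := by
        rw [show i + k = 2*(s+v+1) by omega, pow_mul]; norm_num
      have hni : ((-1:ℤ)) ^ i = -1 := Odd.neg_one_pow ⟨s, hs⟩
      have hnj : ((-1:ℤ)) ^ (i+k) = 1 := Even.neg_one_pow ⟨s+v+1, by omega⟩
      rw [h3i, h3j, hni, hnj] at h8d
      obtain ⟨p, hp⟩ := nine_mod8' s
      obtain ⟨q, hq⟩ := nine_mod8' (s+v+1)
      rw [hp, hq] at h8d
      omega

lemma pow_sub_one_dvd_of_dvd {m k : ℕ} (h : m ∣ k) : (3:ℕ) ^ m - 1 ∣ 3 ^ k - 1 := by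
  obtain ⟨s, rfl⟩ := h
  calc (3:ℕ) ^ m - 1 = 3 ^ m - 1 ^ s := by simp
  _ ∣ (3 ^ m) ^ s - (1:ℕ) ^ s := by
      have := Nat.sub_dvd_pow_sub_pow (3 ^ m) 1 s
      simpa using this
  _ = 3 ^ (m * s) - 1 := by rw [← pow_mul]; simp

lemma exists_good_k (b : ℕ) (hb : 0 < b) (h3 : ¬ 3 ∣ b) :
    ∃ k, Even k ∧ 0 < k ∧ k ≤ max b 2 ∧ 4 * b ∣ 3 ^ k - 1 := by
  set β := b.factorization 2 with hβ
  set r := b / 2 ^ β with hrdef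
  have hbr : 2 ^ β * r = b := Nat.ordProj_mul_ordCompl_eq_self b 2
  have hr2 : ¬ 2 ∣ r := Nat.not_dvd_ordCompl Nat.prime_two hb.ne'
  have hrdvd : r ∣ b := Nat.ordCompl_dvd b 2
  have hr3 : ¬ 3 ∣ r := fun h => h3 (h.trans hrdvd)
  have hrpos : 0 < r := Nat.ordCompl_pos 2 hb.ne'
  set j := max β 1 with hj
  have hj1 : 1 ≤ j := le_max_right β 1
  set φ := Nat.totient r with hφ
  have hφpos : 0 < φ := Nat.totient_pos.mpr hrpos
  have h2j : (2:ℕ) ∣ 2 ^ j := dvd_pow_self 2 (by omega : j ≠ 0)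
  have h2lcm : 2 ∣ Nat.lcm (2 ^ j) φ := h2j.trans (Nat.dvd_lcm_left _ _)
  refine ⟨Nat.lcm (2 ^ j) φ, ?_, ?_, ?_, ?_⟩
  · obtain ⟨c, hc⟩ := h2lcm
    exact ⟨c, by omega⟩
  · exact Nat.pos_of_ne_zero (Nat.lcm_ne_zero (by positivity) hφpos.ne')
  · -- size bound
    rcases Nat.lt_or_ge r 2 with hr1 | hr2
    · -- r = 1
      have hr1' : r = 1 := by omega
      have hφ1 : φ = 1 := by rw [hφ, hr1', Nat.totient_one]
      have hlcm : Nat.lcm (2 ^ j) φ = 2 ^ j := by rw [hφ1, Nat.lcm_one_right]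
      rcases Nat.eq_zero_or_pos β with hβ0 | hβ1
      · have hb1 : b = 1 := by rw [← hbr, hβ0, hr1']; norm_num
        have : j = 1 := by rw [hj, hβ0]; norm_num
        rw [hlcm, this, hb1]
        norm_num
      · have hjβ : j = β := by omega
        have hble : 2 ^ j = b := by rw [hjβ, ← hbr, hr1', mul_one]
        rw [hlcm, hble]
        exact le_max_left b 2
    · -- r ≥ 3
      have hr3' : 3 ≤ r := by omega
      have hφeven : 2 ∣ φ := (Nat.totient_even (by omega : 2 < r)).two_dvd
      have hφlt : φ < r := Nat.totient_lt r (by omega)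
      rcases Nat.eq_zero_or_pos β with hβ0 | hβ1
      · -- b = r odd
        have hbrr : b = r := by rw [← hbr, hβ0]; norm_num
        have hj1' : j = 1 := by rw [hj, hβ0]; norm_num
        have hdvd : Nat.lcm (2 ^ j) φ ∣ φ := Nat.lcm_dvd (by rw [hj1', pow_one]; exact hφeven) dvd_rfl
        have := Nat.le_of_dvd hφpos hdvd
        calc Nat.lcm (2 ^ j) φ ≤ φ := this
        _ ≤ b := by omega
        _ ≤ max b 2 := le_max_left b 2
      · -- β ≥ 1
        have hjβ : j = β := by omega
        obtain ⟨φ', hφ'⟩ := hφeven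
        have hdvd : Nat.lcm (2 ^ j) φ ∣ 2 ^ β * φ' := by
          apply Nat.lcm_dvd
          · rw [hjβ]; exact Dvd.intro φ' rfl
          · rw [hφ']
            have h2 : (2:ℕ) ∣ 2 ^ β := dvd_pow_self 2 (by omega)
            obtain ⟨c, hc⟩ := h2
            exact ⟨c, by rw [hc]; ring⟩
        have hle : Nat.lcm (2 ^ j) φ ≤ 2 ^ β * φ' := by
          have hφ'pos : 0 < φ' := by omega
          exact Nat.le_of_dvd (by positivity) hdvd
        have hφ'r : φ' ≤ r := by omega
        calc Nat.lcm (2 ^ j) φ ≤ 2 ^ β * φ' := hle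
        _ ≤ 2 ^ β * r := Nat.mul_le_mul_left _ hφ'r
        _ = b := hbr
        _ ≤ max b 2 := le_max_left b 2
  · -- divisibility 4b ∣ 3^k - 1
    have h4b : 4 * b = 2 ^ (β+2) * r := by rw [← hbr]; ring
    have hEuler : (3:ℕ) ^ φ ≡ 1 [MOD r] := Nat.ModEq.pow_totient
      ((Nat.Prime.coprime_iff_not_dvd Nat.prime_three).mpr hr3)
    have hrd : r ∣ 3 ^ φ - 1 :=
      (Nat.modEq_iff_dvd' (Nat.one_le_pow _ _ (by norm_num))).mp hEuler.symm
    have h2d : (2:ℕ) ^ (β+2) ∣ 3 ^ (2 ^ j) - 1 :=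
      dvd_trans (pow_dvd_pow 2 (by omega : β + 2 ≤ j + 2)) (easy_lte j hj1)
    have hcop : Nat.Coprime (2 ^ (β+2)) r := Nat.Coprime.pow_left _
      ((Nat.Prime.coprime_iff_not_dvd Nat.prime_two).mpr hr2)
    rw [h4b]
    exact hcop.mul_dvd_of_dvd_of_dvd
      (h2d.trans (pow_sub_one_dvd_of_dvd (Nat.dvd_lcm_left _ _)))
      (hrd.trans (pow_sub_one_dvd_of_dvd (Nat.dvd_lcm_right _ _)))

lemma kill (a k b : ℕ) (hk : Even k) (hdvd : 4 * b ∣ 3 ^ k - 1) :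
    ((3:ℤ) ^ a * b) ∣ salajanU (a + k) - salajanU a := by
  obtain ⟨c, hc⟩ := hdvd
  have h1 : (1:ℕ) ≤ 3 ^ k := Nat.one_le_pow _ _ (by norm_num)
  have hZ : (3:ℤ) ^ k - 1 = 4 * b * c := by
    have := congrArg (fun x : ℕ => (x : ℤ)) hc
    push_cast [h1] at this
    linarith
  refine ⟨c, ?_⟩
  have h4 : (4:ℤ) * (salajanU (a+k) - salajanU a) = 4 * ((3:ℤ) ^ a * b * c) := by
    rw [mul_sub, four_mul_salajanU, four_mul_salajanU, pow_add, pow_add, hk.neg_one_pow]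
    linear_combination (3:ℤ) ^ a * hZ
  have := mul_left_cancel₀ (by norm_num : (4:ℤ) ≠ 0) h4
  linarith

lemma three_pow_ge (a : ℕ) : 2 * a + 1 ≤ 3 ^ a := by
  induction a with
  | zero => norm_num
  | succ a ih =>
    have : (3:ℕ) ^ (a+1) = 3 ^ a + 3 ^ a + 3 ^ a := by ring
    have h1 : (1:ℕ) ≤ 3 ^ a := Nat.one_le_pow _ _ (by norm_num)
    omega

theorem salajanD_not_div_three (n : ℕ) (hn : 1 ≤ n) : ¬ 3 ∣ salajanD n := by
  intro h3
  set e := Nat.clog 2 n with he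
  have hMn : n ≤ 2 ^ e := Nat.le_pow_clog one_lt_two n
  have hMS : 2 ^ e ∈ {m : ℕ | 0 < m ∧ ∀ i j : ℕ, 1 ≤ i → i < j → j ≤ n →
      ¬ (salajanU i ≡ salajanU j [ZMOD (m : ℤ)])} := by
    refine ⟨by positivity, ?_⟩
    intro i j hi hij hjn hmod
    have hdvd : ((2 ^ e : ℕ) : ℤ) ∣ salajanU j - salajanU i := Int.ModEq.dvd hmod
    have hdvd' : (2:ℤ) ^ e ∣ salajanU j - salajanU i := by push_cast at hdvd; exact hdvd
    exact two_pow_discr e i j hi hij (by omega) hdvd'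
  have hne : Set.Nonempty {m : ℕ | 0 < m ∧ ∀ i j : ℕ, 1 ≤ i → i < j → j ≤ n →
      ¬ (salajanU i ≡ salajanU j [ZMOD (m : ℤ)])} := ⟨2 ^ e, hMS⟩
  have hmem := Nat.sInf_mem hne
  have hle : salajanD n ≤ 2 ^ e := Nat.sInf_le hMS
  rw [salajanD] at h3 hle
  set m0 := sInf {m : ℕ | 0 < m ∧ ∀ i j : ℕ, 1 ≤ i → i < j → j ≤ n →
      ¬ (salajanU i ≡ salajanU j [ZMOD (m : ℤ)])} with hm0
  obtain ⟨hm0pos, hdiscr⟩ := hmem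
  have hm03 : 3 ≤ m0 := Nat.le_of_dvd hm0pos h3
  set a := m0.factorization 3 with ha
  set b := m0 / 3 ^ a with hbdef
  have hab : 3 ^ a * b = m0 := Nat.ordProj_mul_ordCompl_eq_self m0 3
  have ha1 : 1 ≤ a := Nat.Prime.factorization_pos_of_dvd Nat.prime_three hm0pos.ne' h3
  have hb3 : ¬ 3 ∣ b := Nat.not_dvd_ordCompl Nat.prime_three hm0pos.ne'
  have hbpos : 0 < b := Nat.ordCompl_pos 3 hm0pos.ne'
  obtain ⟨k, hke, hkpos, hkle, hkdvd⟩ := exists_good_k b hbpos hb3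
  by_cases hcase : a + k ≤ n
  · -- contradiction with discrimination
    have hdint := kill a k b hke hkdvd
    refine hdiscr a (a + k) ha1 (by omega) hcase ?_
    rw [Int.modEq_iff_dvd]
    have : ((m0 : ℕ) : ℤ) = (3:ℤ) ^ a * b := by
      rw [← hab]; push_cast; ring
    rw [this]
    exact hdint
  · -- size contradiction
    push_neg at hcase
    rcases Nat.eq_or_lt_of_le hn with h1 | h2
    · -- n = 1
      have hn1 : n = 1 := h1.symm
      have he0 : e = 0 := by rw [he, hn1, Nat.clog_one_right]
      rw [he0] at hle
      simp at hle
      omega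
    · -- n ≥ 2
      have he1 : 1 ≤ e := by
        by_contra hh
        have : e = 0 := by omega
        rw [this] at hMn
        simp at hMn
        omega
      have hhalf : 2 ^ (e - 1) < n := Nat.pow_pred_clog_lt_self one_lt_two h2
      have h2e : 2 ^ e = 2 * 2 ^ (e - 1) := by
        rw [← pow_succ']
        congr 1
        omega
      -- m0 ≤ 2^e ≤ 2n - 2; n + 1 ≤ a + k; k ≤ max b 2; m0 = 3^a * b; 3^a ≥ 2a+1
      have hpow := three_pow_ge a
      have hmax : k ≤ max b 2 := hkle
      rcases le_or_gt b 2 with hb2 | hb4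
      · -- b ≤ 2 : max = 2, k ≤ 2, so n < a + 2, m0 = 3^a b ≥ 3^a ≥ 2a+1
        have hk2 : k ≤ 2 := by omega
        have hm0ge : 2 * a + 1 ≤ m0 := by
          calc 2 * a + 1 ≤ 3 ^ a := hpow
          _ ≤ 3 ^ a * b := Nat.le_mul_of_pos_right _ hbpos
          _ = m0 := hab
        omega
      · -- b ≥ 3 (and b ≠ 3): max = b, k ≤ b
        have hmaxb : max b 2 = b := max_eq_left (by omega)
        have hkb : k ≤ b := by omega
        -- m0 = 3^a b ≥ (2a+1) b = 2ab + b ≥ 2a + 2b (since (a-1)(b-1) ≥ ... )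
        have hm0ge : 2 * a + 2 * b ≤ m0 := by
          have h1 : (2*a+1) * b ≤ 3 ^ a * b := Nat.mul_le_mul_right _ hpow
          have h2 : 2 * a + 2 * b ≤ (2*a+1) * b := by nlinarith
          omega
        omega
end

section
/- Every Salajan value d > 1 (i.e., every d in the image of D_S other than 1) is a prime power p^m with p = 2 or p > 3; moreover if p > 3 then ord_9(p^m) = φ(p^m)/2 and ord_9(p) = (p−1)/2, and if additionally m ≥ 2 then 3^{p−1} ≢ 1 (mod p^2). -/
lemma four_dvd (j : ℕ) : (4 : ℤ) ∣ (3 : ℤ) ^ j - 5 * (-1) ^ j := by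
  have h : (3 : ℤ) ^ j ≡ (-1) ^ j [ZMOD 4] := (Int.ModEq.pow j (by decide))
  have h4 : (4:ℤ) ∣ (3:ℤ)^j - (-1)^j := Int.ModEq.dvd h.symm
  obtain ⟨z, hz⟩ := h4
  exact ⟨z - (-1)^j, by linarith [hz]⟩

lemma uEq (j : ℕ) : 4 * salajanU j = (3 : ℤ) ^ j - 5 * (-1) ^ j := by
  rw [salajanU, Int.mul_ediv_cancel' (four_dvd j)]

lemma udiff (i g : ℕ) :
    4 * (salajanU (i + g) - salajanU i)
      = 3 ^ i * (3 ^ g - 1) - 5 * (-1) ^ i * ((-1) ^ g - 1) := by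
  have h1 := uEq (i + g); have h2 := uEq i
  have e1 : (3:ℤ) ^ (i+g) = 3 ^ i * 3 ^ g := pow_add 3 i g
  have e2 : (-1:ℤ) ^ (i+g) = (-1) ^ i * (-1) ^ g := pow_add (-1) i g
  linarith [h1, h2, e1, e2]

lemma binom (c : ℤ) (n : ℕ) : ∃ z : ℤ, (1 + c) ^ n = 1 + n * c + c ^ 2 * z := by
  induction n with
  | zero => exact ⟨0, by ring⟩
  | succ n ih =>
    obtain ⟨z, hz⟩ := ih
    refine ⟨z + n + c * z, ?_⟩
    rw [pow_succ, hz]; push_cast; ring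

lemma lift1 (x : ℤ) (p j : ℕ) (hj : 1 ≤ j) (h : (p:ℤ) ^ j ∣ x - 1) :
    (p:ℤ) ^ (j + 1) ∣ x ^ p - 1 := by
  set c : ℤ := x - 1 with hc
  have hc1 : x = 1 + c := by ring
  obtain ⟨z, hz⟩ := binom c p
  rw [hc1, hz]
  have h1 : (p:ℤ) ^ (j+1) ∣ (p:ℤ) * c := by
    rw [pow_succ, mul_comm ((p:ℤ)^j) _]
    exact mul_dvd_mul dvd_rfl h
  have h2 : (p:ℤ) ^ (j+1) ∣ c ^ 2 * z := by
    refine dvd_mul_of_dvd_left ?_ z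
    calc (p:ℤ)^(j+1) ∣ (p:ℤ)^(2*j) := pow_dvd_pow _ (by omega)
    _ = ((p:ℤ)^j)^2 := by rw [← pow_mul, mul_comm]
    _ ∣ c^2 := pow_dvd_pow_of_dvd h 2
  have : (1 : ℤ) + p * c + c^2*z - 1 = p*c + c^2*z := by ring
  rw [this]
  exact dvd_add h1 h2

lemma liftr (x : ℤ) (p j r : ℕ) (hj : 1 ≤ j) (h : (p:ℤ) ^ j ∣ x - 1) :
    (p:ℤ) ^ (j + r) ∣ x ^ (p ^ r) - 1 := by
  induction r with
  | zero => simpa using h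
  | succ r ih =>
    have := lift1 (x ^ (p ^ r)) p (j + r) (by omega) ih
    rw [← pow_mul, ← pow_succ] at this
    convert this using 2 <;> omega

lemma vlemma (s : ℕ) : ∃ w : ℤ, Odd w ∧ (9:ℤ) ^ (2 ^ s) = 1 + 2 ^ (s + 3) * w := by
  induction s with
  | zero => exact ⟨1, odd_one, by norm_num⟩
  | succ s ih =>
    obtain ⟨w, hw, he⟩ := ih
    refine ⟨w * (2 ^ (s + 2) * w + 1), ?_, ?_⟩
    · have h2 : Odd (2 ^ (s + 2) * w + 1) := Even.add_one (by
        exact (Even.mul_right ⟨2^(s+1), by rw [← two_mul]; ring⟩ w))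
      exact hw.mul h2
    · have : (9:ℤ) ^ 2 ^ (s+1) = ((9:ℤ) ^ 2 ^ s) ^ 2 := by
        rw [← pow_mul, pow_succ]
      rw [this, he]; ring

-- dvd of 9^k - 1 when 2^(a-1) | k
lemma nine_pow_dvd (a k : ℕ) (ha : 1 ≤ a) (h : 2 ^ (a - 1) ∣ k) :
    (2:ℤ) ^ (a + 2) ∣ (9:ℤ) ^ k - 1 := by
  obtain ⟨w, hw, he⟩ := vlemma (a - 1)
  have h1 : (2:ℤ) ^ (a + 2) ∣ (9:ℤ) ^ (2 ^ (a-1)) - 1 := by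
    rw [he]
    have : (1:ℤ) + 2 ^ (a - 1 + 3) * w - 1 = 2 ^ (a-1+3) * w := by ring
    rw [this]
    exact dvd_mul_of_dvd_left (pow_dvd_pow 2 (by omega)) w
  obtain ⟨m, hm⟩ := h
  calc (2:ℤ) ^ (a+2) ∣ (9:ℤ) ^ (2 ^ (a-1)) - 1 := h1
  _ ∣ ((9:ℤ) ^ (2 ^ (a-1))) ^ m - 1 := by
      simpa using sub_dvd_pow_sub_pow ((9:ℤ) ^ 2 ^ (a-1)) 1 m
  _ = (9:ℤ) ^ k - 1 := by rw [← pow_mul, ← hm]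

lemma nine_pow_not_dvd (e k : ℕ) (hk : 1 ≤ k) (h : ¬ 2 ^ (e - 1) ∣ k) :
    ¬ (2:ℤ) ^ (e + 2) ∣ (9:ℤ) ^ k - 1 := by
  intro hdvd
  have he1 : 1 ≤ e := by
    by_contra h'
    exact h (by simpa [Nat.eq_zero_of_not_pos (by omega : ¬ 1 ≤ e)] using one_dvd k)
  set s := k.factorization 2 with hs
  have hks : 2 ^ s ∣ k := Nat.ordProj_dvd k 2
  have hse : s + 1 ≤ e - 1 := by
    by_contra h'
    exact h (dvd_trans (pow_dvd_pow 2 (by omega)) hks)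
  set k' := k / 2 ^ s with hk'
  have hkk : k = 2 ^ s * k' := (Nat.ordProj_mul_ordCompl_eq_self k 2).symm
  have hk'odd : ¬ 2 ∣ k' := Nat.not_dvd_ordCompl (by norm_num) (by omega)
  obtain ⟨w, hw, he9⟩ := vlemma s
  set c : ℤ := 2 ^ (s + 3) * w with hc
  obtain ⟨z, hz⟩ := by exact binom c k'
  have h9k : (9:ℤ) ^ k - 1 = (k' : ℤ) * c + c ^ 2 * z := by
    rw [hkk, pow_mul, he9, hz]; ring
  have hd1 : (2:ℤ) ^ (s + 4) ∣ (9:ℤ)^k - 1 := dvd_trans (pow_dvd_pow 2 (by omega)) hdvd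
  have hd2 : (2:ℤ) ^ (s + 4) ∣ c ^ 2 * z := by
    refine dvd_mul_of_dvd_left ?_ z
    rw [hc, mul_pow, ← pow_mul]
    exact dvd_mul_of_dvd_left (pow_dvd_pow 2 (by omega)) _
  have hd3 : (2:ℤ) ^ (s + 4) ∣ (k':ℤ) * c := by
    have := dvd_sub hd1 hd2
    rw [h9k] at this
    simpa using this
  -- extract contradiction: 2 ∣ k' * w
  have : (2:ℤ) ∣ (k':ℤ) * w := by
    rcases hd3 with ⟨m, hm⟩
    rw [hc] at hm
    have hne : ((2:ℤ)^(s+3)) ≠ 0 := by positivity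
    have hmm : (2:ℤ)^(s+3) * ((k':ℤ) * w) = 2^(s+3) * (2 * m) := by
      rw [show (2:ℤ)^(s+4) = 2^(s+3)*2 from pow_succ 2 (s+3)] at hm
      ring_nf at hm ⊢; linarith [hm]
    exact ⟨m, mul_left_cancel₀ hne hmm⟩
  have hk'o : Odd (k':ℤ) := by
    have : Odd k' := Nat.odd_iff.mpr (by omega)
    exact_mod_cast this
  have hodd : Odd ((k':ℤ) * w) := hk'o.mul hw
  rw [Int.odd_iff] at hodd
  omega

-- L1a : collision mod powers of 2
lemma L1a (a i g : ℕ) (h : 2 ^ a ∣ g) : (2:ℤ) ^ a ∣ salajanU (i + g) - salajanU i := by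
  rcases Nat.eq_zero_or_pos a with rfl | ha
  · simpa using one_dvd _
  -- g even, write g = 2k
  have hg2 : 2 ∣ g := dvd_trans (dvd_pow_self 2 (by omega)) h
  obtain ⟨k, rfl⟩ := hg2
  have hgeven : (-1:ℤ) ^ (2 * k) = 1 := by
    rw [pow_mul]; norm_num
  have h4 : 4 * (salajanU (i + 2*k) - salajanU i) = 3 ^ i * ((9:ℤ) ^ k - 1) := by
    rw [udiff, hgeven]
    have : (3:ℤ) ^ (2*k) = 9 ^ k := by rw [pow_mul]; norm_num
    rw [this]; ring
  have hk : 2 ^ (a - 1) ∣ k := by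
    have : 2 ^ (a-1) * 2 ∣ 2 * k := by
      rw [mul_comm (2^(a-1)) 2, ← pow_succ']
      convert h using 2
      omega
    rw [mul_comm 2 k] at this
    exact (mul_dvd_mul_iff_right (by norm_num : (2:ℕ) ≠ 0)).mp this
  have h9 : (2:ℤ) ^ (a + 2) ∣ (9:ℤ) ^ k - 1 := nine_pow_dvd a k ha hk
  have : (2:ℤ) ^ (a + 2) ∣ 4 * (salajanU (i + 2*k) - salajanU i) := by
    rw [h4]; exact dvd_mul_of_dvd_right h9 _
  have h42 : (2:ℤ)^(a+2) = 4 * 2 ^ a := by rw [pow_add]; ring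
  rw [h42] at this
  exact (mul_dvd_mul_iff_left (by norm_num : (4:ℤ) ≠ 0)).mp this

-- L1b : powers of 2 discriminate
lemma L1b (e i j : ℕ) (hij : i < j) (hlt : j - i < 2 ^ e) :
    ¬ (2:ℤ) ^ e ∣ salajanU j - salajanU i := by
  intro hdvd
  obtain ⟨g, rfl⟩ : ∃ g, j = i + g := ⟨j - i, by omega⟩
  have hg1 : 1 ≤ g := by omega
  have hlt' : g < 2 ^ e := by omega
  have he1 : 1 ≤ e := by
    rcases Nat.eq_zero_or_pos e with rfl | h
    · simp at hlt'; omega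
    · exact h
  rcases Nat.even_or_odd g with hpar | hpar
  · -- even case
    obtain ⟨k, rfl⟩ := hpar
    have hk1 : 1 ≤ k := by omega
    have h4 : 4 * (salajanU (i + (k+k)) - salajanU i) = 3 ^ i * ((9:ℤ) ^ k - 1) := by
      rw [udiff]
      have e1 : (-1:ℤ) ^ (k + k) = 1 := by
        rw [← two_mul, pow_mul]; norm_num
      have e2 : (3:ℤ) ^ (k+k) = 9 ^ k := by rw [← two_mul, pow_mul]; norm_num
      rw [e1, e2]; ring
    have hnk : ¬ 2 ^ (e - 1) ∣ k := by
      intro hdk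
      have h1 := Nat.le_of_dvd (by omega) hdk
      have h2 : 2 ^ e = 2 ^ (e-1) * 2 := by rw [← pow_succ]; congr 1; omega
      omega
    have hd : (2:ℤ) ^ (e + 2) ∣ 3 ^ i * ((9:ℤ)^k - 1) := by
      rw [← h4]
      have : (2:ℤ)^(e+2) = 4 * 2^e := by rw [pow_add]; ring
      rw [this]
      exact mul_dvd_mul dvd_rfl hdvd
    have hcop : IsCoprime ((2:ℤ)^(e+2)) ((3:ℤ)^i) := by
      apply IsCoprime.pow
      rw [Int.isCoprime_iff_gcd_eq_one]; decide
    exact nine_pow_not_dvd e k hk1 hnk (hcop.dvd_of_dvd_mul_left hd)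
  · -- odd case: u j - u i is odd
    have hodd : ¬ (2:ℤ) ∣ salajanU (i + g) - salajanU i := by
      intro h2
      have h8 : (8:ℤ) ∣ 4 * (salajanU (i + g) - salajanU i) := by
        obtain ⟨m, hm⟩ := h2
        exact ⟨m, by rw [hm]; ring⟩
      rw [udiff] at h8
      -- compute mod 8 : map to ZMod 8
      obtain ⟨m, rfl⟩ := hpar
      have h38 : ∀ n : ℕ, Even n → (3:ZMod 8)^n = 1 := by
        rintro n ⟨r, rfl⟩
        rw [show r + r = 2*r by omega, pow_mul, show (3:ZMod 8)^2 = 1 by decide, one_pow]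
      have this8 := (ZMod.intCast_zmod_eq_zero_iff_dvd _ 8).mpr h8
      push_cast at this8
      rw [pow_succ (3 : ZMod 8) (2*m), h38 (2*m) ⟨m, by omega⟩,
        Odd.neg_one_pow (by exact ⟨m, rfl⟩ : Odd (2*m+1))] at this8
      rcases Nat.even_or_odd i with ⟨q, rfl⟩ | ⟨q, rfl⟩
      · rw [h38 (q+q) ⟨q, rfl⟩, Even.neg_one_pow (⟨q, rfl⟩ : Even (q+q))] at this8
        revert this8; decide
      · rw [pow_succ (3 : ZMod 8) (2*q), h38 (2*q) ⟨q, by omega⟩,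
          Odd.neg_one_pow (by exact ⟨q, rfl⟩ : Odd (2*q+1))] at this8
        revert this8; decide
    exact hodd (dvd_trans (dvd_pow_self 2 (by omega)) hdvd)


noncomputable def salE (t : ℕ) : ℕ := orderOf (9 : ZMod t)

lemma B1 (t k : ℕ) (ht : 0 < t) : (t:ℤ) ∣ (9:ℤ)^k - 1 ↔ salE t ∣ k := by
  rw [salE, orderOf_dvd_iff_pow_eq_one]
  rw [← ZMod.intCast_zmod_eq_zero_iff_dvd]
  push_cast
  constructor
  · intro h; linear_combination h
  · intro h; linear_combination h

lemma pow9_dvd {a b : ℕ} (h : a ∣ b) : (9:ℤ)^a - 1 ∣ (9:ℤ)^b - 1 := by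
  obtain ⟨c, rfl⟩ := h
  rw [pow_mul]
  simpa using sub_dvd_pow_sub_pow ((9:ℤ)^a) 1 c

lemma euler3 (t : ℕ) (ht : 0 < t) (hcop : Nat.Coprime 3 t) :
    (t:ℤ) ∣ (3:ℤ)^(t.totient) - 1 := by
  have h := Nat.ModEq.pow_totient hcop
  have h2 : ((3:ℕ)^t.totient : ℤ) ≡ ((1:ℕ) : ℤ) [ZMOD (t:ℤ)] := by
    exact_mod_cast (Int.natCast_modEq_iff).mpr h
  have h3 := h2.dvd
  push_cast at h3
  obtain ⟨z, hz⟩ := h3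
  exact ⟨-z, by linarith⟩

lemma salE_one : salE 1 = 1 := by
  rw [salE, orderOf_eq_one_iff]
  exact Subsingleton.elim _ _

lemma salE_lift (p j r : ℕ) (hp : 0 < p) (hj : 1 ≤ j) :
    salE (p^(j+r)) ∣ salE (p^j) * p^r := by
  rw [← B1 _ _ (pow_pos hp _)]
  have h1 : (p:ℤ)^j ∣ (9:ℤ)^(salE (p^j)) - 1 := by
    have := (B1 (p^j) _ (pow_pos hp _)).mpr dvd_rfl
    push_cast at this; exact this
  have h2 := liftr _ p j r hj h1
  rw [← pow_mul] at h2
  push_cast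
  exact h2

lemma salE_pos (t : ℕ) (ht : 0 < t) (hcop : Nat.Coprime 3 t) : 1 ≤ salE t := by
  have h9 : (t:ℤ) ∣ (9:ℤ)^(t.totient) - 1 := by
    have h1 : (9:ℤ)^(t.totient) = ((3:ℤ)^(t.totient))^2 := by
      rw [← pow_mul, mul_comm, pow_mul]; norm_num
    rw [h1]
    exact dvd_trans (euler3 t ht hcop)
      (by simpa using sub_dvd_pow_sub_pow ((3:ℤ)^t.totient) 1 2)
  have hE := (B1 t _ ht).mp h9
  have hphi : 0 < t.totient := Nat.totient_pos.mpr ht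
  rcases Nat.eq_zero_or_pos (salE t) with h | h
  · rw [h] at hE; omega
  · exact h

lemma salE_dvd_half_totient (t : ℕ) (ht : 2 < t) (hcop : Nat.Coprime 3 t) :
    t.totient = 2 * (t.totient / 2) ∧ salE t ∣ t.totient / 2 := by
  have heven : Even t.totient := Nat.totient_even ht
  obtain ⟨F, hF⟩ := heven
  have hF2 : t.totient = 2 * F := by omega
  have h9 : (t:ℤ) ∣ (9:ℤ)^F - 1 := by
    have h1 : (9:ℤ)^F = (3:ℤ)^(t.totient) := by
      rw [hF2, pow_mul]; norm_num
    rw [h1]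
    exact euler3 t (by omega) hcop
  have hd := (B1 t F (by omega)).mp h9
  have hFeq : F = t.totient / 2 := by omega
  exact ⟨by omega, hFeq ▸ hd⟩

lemma salE_lcm (q s : ℕ) (hq : 0 < q) (hs : 0 < s) (hcop : Nat.Coprime q s) :
    salE (q * s) ∣ Nat.lcm (salE q) (salE s) := by
  rw [← B1 (q*s) _ (by positivity)]
  push_cast
  refine IsCoprime.mul_dvd ?_ ?_ ?_
  · exact_mod_cast Nat.isCoprime_iff_coprime.mpr hcop
  · exact (B1 q _ hq).mpr (Nat.dvd_lcm_left _ _)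
  · exact (B1 s _ hs).mpr (Nat.dvd_lcm_right _ _)

lemma collision (a b t : ℕ) (ht : 0 < t) (hodd : ¬ 2 ∣ t) (hcop3 : Nat.Coprime 3 t)
    (i g : ℕ) (hib : b ≤ i) (hga : 2^a ∣ g) (hge : 2 * salE t ∣ g) :
    ((2^a * 3^b * t : ℕ) : ℤ) ∣ salajanU (i+g) - salajanU i := by
  have h2 : (2:ℤ)^a ∣ salajanU (i+g) - salajanU i := L1a a i g hga
  have hgeven : 2 ∣ g := dvd_trans ⟨salE t, rfl⟩ hge
  have hghalf : g = 2 * (g / 2) := by omega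
  have hEg : salE t ∣ g / 2 := by
    obtain ⟨c, hc⟩ := hge
    refine ⟨c, ?_⟩
    rw [hc, mul_assoc]
    exact Nat.mul_div_cancel_left _ (by norm_num)
  have h4d : 4 * (salajanU (i+g) - salajanU i) = 3 ^ i * ((9:ℤ) ^ (g/2) - 1) := by
    rw [udiff]
    have e1 : (-1:ℤ) ^ g = 1 := Even.neg_one_pow (even_iff_two_dvd.mpr hgeven)
    have e2 : (3:ℤ) ^ g = 9 ^ (g/2) := by
      rw [hghalf, pow_mul]; norm_num
    rw [e1, e2]; ring
  have ht9 : (t:ℤ) ∣ (9:ℤ)^(g/2) - 1 := (B1 t _ ht).mpr hEg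
  have h3bt : ((3:ℤ)^b * t) ∣ 4 * (salajanU (i+g) - salajanU i) := by
    rw [h4d]
    refine IsCoprime.mul_dvd ?_ ?_ ?_
    · have : Nat.Coprime (3^b) t := hcop3.pow_left b
      have := Nat.isCoprime_iff_coprime.mpr this
      push_cast at this
      exact this
    · exact dvd_mul_of_dvd_left (pow_dvd_pow 3 hib) _
    · exact dvd_mul_of_dvd_right ht9 _
  have hX4 : IsCoprime ((3:ℤ)^b * t) (4:ℤ) := by
    have hn : Nat.Coprime (3^b * t) 4 := by
      have h1 : Nat.Coprime 2 (3^b * t) := by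
        rw [Nat.Prime.coprime_iff_not_dvd Nat.prime_two]
        intro hdv
        rcases (Nat.Prime.dvd_mul Nat.prime_two).mp hdv with h | h
        · exact absurd (Nat.prime_two.dvd_of_dvd_pow h) (by norm_num)
        · exact hodd h
      have := (h1.pow_left 2).symm
      simpa using this
    have := Nat.isCoprime_iff_coprime.mpr hn
    push_cast at this
    exact this
  have hXd : ((3:ℤ)^b * t) ∣ salajanU (i+g) - salajanU i := by
    exact hX4.dvd_of_dvd_mul_left h3bt
  have hfin : IsCoprime ((2:ℤ)^a) ((3:ℤ)^b * t) := by
    have h1 : Nat.Coprime 2 (3^b * t) := by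
      rw [Nat.Prime.coprime_iff_not_dvd Nat.prime_two]
      intro hdv
      rcases (Nat.Prime.dvd_mul Nat.prime_two).mp hdv with h | h
      · exact absurd (Nat.prime_two.dvd_of_dvd_pow h) (by norm_num)
      · exact hodd h
    have := Nat.isCoprime_iff_coprime.mpr (h1.pow_left a)
    push_cast at this
    exact this
  have := hfin.mul_dvd h2 hXd
  push_cast
  rw [mul_assoc]
  exact this


lemma three_pow (b : ℕ) : 2*b+1 ≤ 3^b := by
  induction b with
  | zero => norm_num
  | succ b ih => rw [pow_succ]; omega

theorem salajan_value_is_prime_power (d : ℕ) (hd : 1 < d)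
    (hval : ∃ n : ℕ, 1 ≤ n ∧ salajanD n = d) :
    ∃ p m : ℕ, p.Prime ∧ 1 ≤ m ∧ d = p ^ m ∧ (p = 2 ∨ 3 < p) ∧
      (3 < p →
        2 * orderOf (9 : ZMod (p ^ m)) = Nat.totient (p ^ m) ∧
        2 * orderOf (9 : ZMod p) = p - 1 ∧
        (2 ≤ m → ¬ ((3 : ℤ) ^ (p - 1) ≡ 1 [ZMOD (p : ℤ) ^ 2]))) := by
  obtain ⟨n, hn1, hDn⟩ := hval
  rw [salajanD] at hDn
  set S : Set ℕ := {m : ℕ | 0 < m ∧ ∀ i j : ℕ, 1 ≤ i → i < j → j ≤ n →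
    ¬ (salajanU i ≡ salajanU j [ZMOD (m : ℤ)])} with hS
  -- powers of two discriminate
  have hpow2mem : ∀ e : ℕ, n ≤ 2^e → 2^e ∈ S := by
    intro e hne
    refine ⟨pow_pos two_pos e, ?_⟩
    intro i j hi hij hjn hcong
    have hdv := hcong.dvd
    push_cast at hdv
    exact L1b e i j hij (by omega) hdv
  -- n ≥ 2
  have hn2 : 2 ≤ n := by
    by_contra h
    have h1 : (1:ℕ) ∈ S := ⟨one_pos, by intro i j hi hij hjn _; omega⟩
    have := Nat.sInf_le h1
    omega
  -- d ∈ S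
  have hdmem : d ∈ S := by
    have hne : S.Nonempty := ⟨2^(Nat.clog 2 n), hpow2mem _ (Nat.le_pow_clog one_lt_two n)⟩
    have := Nat.sInf_mem hne
    rwa [hDn] at this
  obtain ⟨hdpos, hdisc⟩ := hdmem
  -- d + 2 ≤ 2n
  have hdle : d + 2 ≤ 2*n := by
    have hc1 : 0 < Nat.clog 2 n := Nat.clog_pos one_lt_two (by omega)
    have h1 : 2^(Nat.clog 2 n - 1) < n := by
      have := Nat.pow_pred_clog_lt_self one_lt_two (show 1 < n by omega)
      simpa [Nat.pred_eq_sub_one] using this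
    have h2 : 2^(Nat.clog 2 n) ≤ 2*n - 2 := by
      rw [show Nat.clog 2 n = (Nat.clog 2 n - 1) + 1 by omega, pow_succ]
      omega
    have h3 := Nat.sInf_le (hpow2mem _ (Nat.le_pow_clog one_lt_two n))
    rw [hDn] at h3
    omega
  -- factor d = 2^a * 3^b * t
  set a := d.factorization 2 with ha
  set d1 := d / 2^a with hd1def
  have hd1 : 2^a * d1 = d := Nat.ordProj_mul_ordCompl_eq_self d 2
  have hodd1 : ¬ 2 ∣ d1 := Nat.not_dvd_ordCompl Nat.prime_two (by omega)
  have hd1pos : 0 < d1 := by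
    rcases Nat.eq_zero_or_pos d1 with h | h
    · simp [h] at hd1; omega
    · exact h
  set b := d1.factorization 3 with hb
  set t := d1 / 3^b with htdef
  have ht3 : 3^b * t = d1 := Nat.ordProj_mul_ordCompl_eq_self d1 3
  have hnot3 : ¬ 3 ∣ t := Nat.not_dvd_ordCompl Nat.prime_three (by omega)
  have htpos : 0 < t := by
    rcases Nat.eq_zero_or_pos t with h | h
    · simp [h] at ht3; omega
    · exact h
  have hnot2t : ¬ 2 ∣ t := fun h => hodd1 (h.trans ⟨3^b, by rw [← ht3]; ring⟩)
  have hcop3t : Nat.Coprime 3 t := (Nat.Prime.coprime_iff_not_dvd Nat.prime_three).mpr hnot3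
  have hdeq : d = 2^a * 3^b * t := by rw [mul_assoc, ht3, hd1]
  set e := salE t with he
  have hepos : 1 ≤ e := salE_pos t htpos hcop3t
  set g := Nat.lcm (2^a) (2*e) with hg
  have hg2e : 2*e ∣ g := Nat.dvd_lcm_right _ _
  have hg2a : 2^a ∣ g := Nat.dvd_lcm_left _ _
  have hgpos : 0 < g := Nat.lcm_pos (pow_pos two_pos a) (by omega)
  set i0 := max 1 b with hi0
  -- collision bound : n < i0 + g
  have hcol : n < i0 + g := by
    by_contra hcon
    push_neg at hcon
    have hcong : salajanU i0 ≡ salajanU (i0 + g) [ZMOD (d:ℤ)] := by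
      rw [Int.modEq_iff_dvd]
      rw [hdeq]
      exact collision a b t htpos hnot2t hcop3t i0 g (le_max_right 1 b) hg2a hg2e
    exact hdisc i0 (i0+g) (le_max_left 1 b) (by omega) (by omega) hcong
  -- master inequality
  have hM : d + 4 ≤ 2*i0 + 2*g := by omega
  -- bounds on g
  have hgb1 : 1 ≤ a → 2 * g ≤ 2^a * (2*e) := by
    intro ha1
    have h2g : 2 ∣ Nat.gcd (2^a) (2*e) :=
      Nat.dvd_gcd (dvd_pow_self 2 (by omega)) ⟨e, rfl⟩
    have hgcd2 : 2 ≤ Nat.gcd (2^a) (2*e) :=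
      Nat.le_of_dvd (Nat.gcd_pos_of_pos_left _ (pow_pos two_pos a)) h2g
    calc 2 * g ≤ Nat.gcd (2^a) (2*e) * g := Nat.mul_le_mul_right g hgcd2
    _ = 2^a * (2*e) := Nat.gcd_mul_lcm _ _
  have hgb0 : a = 0 → g = 2*e := by
    intro ha0
    rw [hg, ha0, pow_zero]
    exact Nat.lcm_one_left _
  -- t facts
  have htf : t = 1 ∨ (5 ≤ t ∧ 2*e + 1 ≤ t) := by
    rcases eq_or_lt_of_le (show 1 ≤ t from htpos) with h1 | h1
    · exact Or.inl h1.symm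
    · right
      have ht2 : t ≠ 2 := fun h => hnot2t (h ▸ dvd_rfl)
      have ht3' : t ≠ 3 := fun h => hnot3 (h ▸ dvd_rfl)
      have ht4 : t ≠ 4 := fun h => hnot2t (by rw [h]; norm_num)
      have ht5 : 5 ≤ t := by omega
      obtain ⟨hphi, hEd⟩ := salE_dvd_half_totient t (by omega) hcop3t
      have hphipos : 0 < t.totient := Nat.totient_pos.mpr htpos
      have hele : e ≤ t.totient / 2 := Nat.le_of_dvd (by omega) hEd
      have hlt := Nat.totient_lt t (by omega)
      omega
  have h3b := three_pow b
  -- b = 0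
  have hb0 : b = 0 := by
    by_contra hbne
    have hb1 : 1 ≤ b := by omega
    have hi0b : i0 = b := Nat.max_eq_right hb1
    rw [hi0b, hdeq] at hM
    have hMz : ((2:ℤ)^a * 3^b * t) + 4 ≤ 2*b + 2*g := by exact_mod_cast hM
    have h3bz : 2*(b:ℤ) + 1 ≤ 3^b := by exact_mod_cast h3b
    have htz : (1:ℤ) ≤ (t:ℤ) := by exact_mod_cast htpos
    have hbz : (1:ℤ) ≤ (b:ℤ) := by exact_mod_cast hb1
    have hXpos : (0:ℤ) < 2^a := by positivity
    rcases htf with ht1 | ⟨ht5, hte⟩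
    · have he1 : e = 1 := by rw [he, ht1]; exact salE_one
      have htz1 : (t:ℤ) = 1 := by exact_mod_cast ht1
      rcases Nat.eq_zero_or_pos a with ha0 | ha1
      · have hge : g = 2 := by rw [hgb0 ha0, he1]
        have hXz : (2:ℤ)^a = 1 := by rw [ha0]; norm_num
        have hgz : (g:ℤ) = 2 := by exact_mod_cast hge
        rw [hXz, htz1, hgz] at hMz
        linarith
      · have hgle : 2*(g:ℤ) ≤ 2^a * 2 := by
          have h' := hgb1 ha1
          rw [he1] at h'
          exact_mod_cast h'
        have hA2 : (2:ℤ) ≤ 2^a := by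
          calc (2:ℤ) = 2^1 := by norm_num
          _ ≤ 2^a := pow_le_pow_right₀ (by norm_num) ha1
        rw [htz1] at hMz
        have K1 : (0:ℤ) ≤ (2*(b:ℤ)-1) * ((2:ℤ)^a - 2) :=
          mul_nonneg (by linarith) (by linarith)
        have K2 : (2*(b:ℤ)+1) * (2:ℤ)^a ≤ 3^b * 2^a :=
          mul_le_mul_of_nonneg_right h3bz (le_of_lt hXpos)
        linarith [K1, K2, hgle, hMz]
    · have htez : 2*(e:ℤ) + 1 ≤ (t:ℤ) := by exact_mod_cast hte
      have ht5z : (5:ℤ) ≤ (t:ℤ) := by exact_mod_cast ht5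
      rcases Nat.eq_zero_or_pos a with ha0 | ha1
      · have hgz : (g:ℤ) = 2*(e:ℤ) := by exact_mod_cast (hgb0 ha0)
        have hXz : (2:ℤ)^a = 1 := by rw [ha0]; norm_num
        rw [hXz, hgz] at hMz
        have K1 : (2*(b:ℤ)+1) * (t:ℤ) ≤ 3^b * (t:ℤ) :=
          mul_le_mul_of_nonneg_right h3bz (by linarith)
        have K2 : (0:ℤ) ≤ (2*(b:ℤ)-2) * ((t:ℤ)-1) :=
          mul_nonneg (by linarith) (by linarith)
        linarith [K1, K2, htez, hMz]
      · have hglez : 2*(g:ℤ) ≤ 2^a*(2*(e:ℤ)) := by exact_mod_cast (hgb1 ha1)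
        have hA2 : (2:ℤ) ≤ 2^a := by
          calc (2:ℤ) = 2^1 := by norm_num
          _ ≤ 2^a := pow_le_pow_right₀ (by norm_num) ha1
        have H1 : (2:ℤ)^a*(2*(e:ℤ)+1) ≤ 2^a*(t:ℤ) :=
          mul_le_mul_of_nonneg_left htez (le_of_lt hXpos)
        have H2 : (2*(b:ℤ)+1)*(t:ℤ) ≤ 3^b*(t:ℤ) :=
          mul_le_mul_of_nonneg_right h3bz (by linarith)
        have H3 : (2:ℤ)^a*((2*(b:ℤ)+1)*(t:ℤ)) ≤ 2^a*(3^b*(t:ℤ)) :=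
          mul_le_mul_of_nonneg_left H2 (le_of_lt hXpos)
        have H5 : (0:ℤ) < 2^a*(t:ℤ) := by positivity
        have H4 : (0:ℤ) ≤ 2*(b:ℤ)*(2^a*(t:ℤ) - 1) :=
          mul_nonneg (by linarith) (by linarith)
        linarith [hMz, hglez, H1, H3, H4]
  -- now i0 = 1
  have hi01 : i0 = 1 := by rw [hi0, hb0]; rfl
  rw [hi01, hdeq, hb0] at hM
  simp only [pow_zero, mul_one, one_mul] at hM
  -- hM : 2^a * t + 4 ≤ 2*1 + 2*g
  rcases htf with ht1 | ⟨ht5, hte⟩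
  · -- t = 1 : d = 2^a
    have hda : d = 2^a := by rw [hdeq, hb0, ht1]; ring
    have ha1 : 1 ≤ a := by
      by_contra h
      have ha0 : a = 0 := by omega
      rw [ha0] at hda; simp at hda; omega
    exact ⟨2, a, Nat.prime_two, ha1, hda, Or.inl rfl, fun h => absurd h (by norm_num)⟩
  · -- t ≥ 5
    rcases Nat.eq_zero_or_pos a with ha0 | ha1
    swap
    · -- a ≥ 1 : contradiction
      exfalso
      have hgle := hgb1 ha1
      have hA2 : 2 ≤ 2^a := by
        calc 2 = 2^1 := rfl
        _ ≤ 2^a := Nat.pow_le_pow_right (by norm_num) ha1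
      have hkey : 2^a * (2*e) + 2^a ≤ 2^a * t := by
        calc 2^a * (2*e) + 2^a = 2^a * (2*e+1) := by ring
        _ ≤ 2^a * t := Nat.mul_le_mul_left _ hte
      linarith
    -- a = 0 : d = t
    have hge := hgb0 ha0
    rw [ha0] at hM
    simp only [pow_zero, one_mul] at hM
    rw [hge] at hM
    -- hM : t + 4 ≤ 2*1 + 2*(2*e)
    have hdt : d = t := by rw [hdeq, hb0, ha0]; ring
    have ht1' : 1 < t := by omega
    set p := t.minFac with hp_def
    have hp : p.Prime := Nat.minFac_prime (by omega)
    set k := t.factorization p with hk_def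
    set q := p ^ k with hq_def
    set s := t / q with hs_def
    have hqs : q * s = t := Nat.ordProj_mul_ordCompl_eq_self t p
    have hk1 : 1 ≤ k :=
      hp.factorization_pos_of_dvd (by omega) (Nat.minFac_dvd t)
    have hcop_ps : Nat.Coprime p s := Nat.coprime_ordCompl hp (by omega)
    have hcop_qs : Nat.Coprime q s := hcop_ps.pow_left k
    have hqdvd : q ∣ t := Nat.ordProj_dvd t p
    have hspos : 0 < s := by
      rcases Nat.eq_zero_or_pos s with h | h
      · simp [h] at hqs; omega
      · exact h
    have hp5 : 5 ≤ p := by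
      have h2 := hp.two_le
      have hpd : p ∣ t := Nat.minFac_dvd t
      have hne2 : p ≠ 2 := fun h => hnot2t (h ▸ hpd)
      have hne3 : p ≠ 3 := fun h => hnot3 (h ▸ hpd)
      have hne4 : p ≠ 4 := fun h => absurd (h ▸ hp) (by decide)
      omega
    have hq5 : 2 < q := by
      have : p ≤ q := Nat.le_self_pow (by omega) p
      omega
    have hcop3q : Nat.Coprime 3 q := Nat.Coprime.coprime_dvd_right hqdvd hcop3t
    rcases eq_or_lt_of_le (show 1 ≤ s from hspos) with hs1 | hs2
    · -- s = 1 : t = p^k, the good case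
      have htq : t = p ^ k := by rw [← hqs, ← hs1]; simp [hq_def]
      obtain ⟨hphi, hEd⟩ := salE_dvd_half_totient t (by omega) hcop3t
      have hphipos : 0 < t.totient := Nat.totient_pos.mpr htpos
      have hlt := Nat.totient_lt t (by omega)
      have h2e : 2 * e = t.totient := by
        obtain ⟨c, hc⟩ := hEd
        rcases Nat.lt_or_ge c 2 with hc2 | hc2
        · interval_cases c <;> omega
        · exfalso
          have h2c : 2 * e ≤ t.totient / 2 := by
            calc 2 * e ≤ c * e := Nat.mul_le_mul_right e hc2
            _ = e * c := mul_comm c e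
            _ = t.totient / 2 := hc.symm
          omega
      -- order mod p
      have hcop3p : Nat.Coprime 3 p :=
        (Nat.coprime_primes Nat.prime_three hp).mpr (by omega)
      obtain ⟨hphip, hEpd⟩ := salE_dvd_half_totient p (by omega) hcop3p
      set Fp := p.totient / 2 with hFp_def
      have hptot : p.totient = p - 1 := Nat.totient_prime hp
      have htotk : t.totient = p^(k-1) * (p-1) := by
        rw [htq, Nat.totient_prime_pow hp (by omega)]
      have hEppos : 1 ≤ salE p := salE_pos p (by omega) hcop3p
      have hFppos : 1 ≤ Fp := by
        have : 0 < p.totient := Nat.totient_pos.mpr (by omega)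
        omega
      have hePF : e = p^(k-1) * Fp := by
        have h1 : p^(k-1) * (2 * Fp) = 2 * (p^(k-1) * Fp) := by ring
        have h2 : 2 * e = p^(k-1) * (p - 1) := by omega
        have h3 : p - 1 = 2 * Fp := by omega
        rw [h3, h1] at h2
        omega
      have hlift := salE_lift p 1 (k-1) (by omega) le_rfl
      rw [show 1 + (k-1) = k by omega, pow_one] at hlift
      have h0 : salE (p^k) = p^(k-1) * Fp := by
        rw [← htq, ← he]; exact hePF
      have hlift2 : p^(k-1) * Fp ∣ salE p * p^(k-1) := by rwa [h0] at hlift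
      have hFpEp : Fp ∣ salE p := by
        have h1 : Fp * p^(k-1) ∣ salE p * p^(k-1) := by
          rw [mul_comm Fp _]; exact hlift2
        exact (Nat.mul_dvd_mul_iff_right (pow_pos (by omega : 0 < p) (k-1))).mp h1
      have hEpFp : salE p = Fp := Nat.dvd_antisymm hEpd hFpEp
      refine ⟨p, k, hp, hk1, by rw [hdt, htq], Or.inr (by omega), fun _ => ⟨?_, ?_, ?_⟩⟩
      · show 2 * salE (p^k) = (p^k).totient
        rw [← htq, ← he]
        exact h2e
      · show 2 * salE p = p - 1
        omega
      · -- Wieferich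
        intro hk2 hW
        have hdvdW : ((p:ℤ))^2 ∣ (9:ℤ)^Fp - 1 := by
          have h1 : (3:ℤ)^(p-1) - 1 = 9^Fp - 1 := by
            rw [show ((9:ℤ)) = 3^2 by norm_num, ← pow_mul,
              show 2 * Fp = p - 1 by omega]
          have h2 := Int.ModEq.dvd hW
          rw [← h1]
          obtain ⟨z, hz⟩ := h2
          exact ⟨-z, by linarith⟩
        have hE2d : salE (p^2) ∣ Fp := by
          apply (B1 (p^2) Fp (pow_pos (by omega) 2)).mp
          push_cast
          exact hdvdW
        have hE2pos : 1 ≤ salE (p^2) :=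
          salE_pos (p^2) (pow_pos (by omega) 2) (hcop3p.pow_right 2)
        have hE2le : salE (p^2) ≤ Fp := Nat.le_of_dvd (by omega) hE2d
        have hlift3 := salE_lift p 2 (k-2) (by omega) (by omega)
        rw [show 2 + (k-2) = k by omega] at hlift3
        have h0' : salE (p^k) = p^(k-1) * Fp := h0
        rw [h0'] at hlift3
        have hle : p^(k-1) * Fp ≤ salE (p^2) * p^(k-2) :=
          Nat.le_of_dvd (by positivity) hlift3
        have hpk : p^(k-1) = p * p^(k-2) := by
          rw [← pow_succ']
          congr 1
          omega
        have hZ : 1 ≤ p^(k-2)*Fp := Nat.mul_pos (pow_pos (by omega) _) hFppos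
        have h2' : p * (p^(k-2)*Fp) ≤ p^(k-2)*Fp := by
          calc p * (p^(k-2)*Fp) = p^(k-1) * Fp := by rw [hpk]; ring
          _ ≤ salE (p^2) * p^(k-2) := hle
          _ ≤ Fp * p^(k-2) := Nat.mul_le_mul_right _ hE2le
          _ = p^(k-2)*Fp := mul_comm _ _
        have h3' : 5 * (p^(k-2)*Fp) ≤ p * (p^(k-2)*Fp) :=
          Nat.mul_le_mul_right _ hp5
        linarith
    · -- s > 1 : contradiction
      exfalso
      have hsdvd : s ∣ t := ⟨q, by rw [← hqs]; ring⟩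
      have hs5 : 2 < s := by
        have hne2 : s ≠ 2 := fun h => hnot2t (h ▸ hsdvd)
        have hne3 : s ≠ 3 := fun h => hnot3 (h ▸ hsdvd)
        omega
      have hcop3s : Nat.Coprime 3 s := Nat.Coprime.coprime_dvd_right hsdvd hcop3t
      obtain ⟨x, hx, hEx⟩ : ∃ x, q.totient = 2*x ∧ salE q ∣ x := by
        obtain ⟨h1, h2⟩ := salE_dvd_half_totient q hq5 hcop3q
        exact ⟨_, h1, h2⟩
      obtain ⟨y, hy, hEy⟩ : ∃ y, s.totient = 2*y ∧ salE s ∣ y := by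
        obtain ⟨h1, h2⟩ := salE_dvd_half_totient s hs5 hcop3s
        exact ⟨_, h1, h2⟩
      have hElcm : salE t ∣ Nat.lcm (salE q) (salE s) := by
        rw [← hqs]
        exact salE_lcm q s (by omega) (by omega) hcop_qs
      have hEd2 : e ∣ x * y := by
        refine hElcm.trans (Nat.lcm_dvd ?_ ?_)
        · exact hEx.trans (dvd_mul_right _ _)
        · exact hEy.trans (dvd_mul_left _ _)
      have hqphipos : 0 < q.totient := Nat.totient_pos.mpr (by omega)
      have hsphipos : 0 < s.totient := Nat.totient_pos.mpr (by omega)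
      have hxpos : 0 < x := by omega
      have hypos : 0 < y := by omega
      have hEle : e ≤ x * y := Nat.le_of_dvd (Nat.mul_pos hxpos hypos) hEd2
      have htot : t.totient = 4 * (x * y) := by
        rw [← hqs, Nat.totient_mul hcop_qs, hx, hy]; ring
      have hlt := Nat.totient_lt t (by omega)
      linarith
end
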